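/- There exists a positive integer n₀ such that for every integer n ≥ n₀, f(3n)² + 2·f(3n)·f(2n) > f(3n−1)·f(3n+1) + f(2n−1)·f(3n+1). -/
import Mathlib

/-- `f n` is the number of relatively prime subsets of `{1, 2, ..., n}`,
i.e. subsets `A` with `gcd A = 1` (such subsets are automatically nonempty). -/
def f (n : ℕ) : ℕ :=
  ((Finset.Icc 1 n).powerset.filter (fun A => A.gcd id = 1)).card

open Finset in
lemma f_le (m : ℕ) : f m ≤ 2 ^ m := by
  unfold f
  calc _ ≤ (Icc 1 m).powerset.card := card_filter_le _ _
    _ = 2 ^ m := by rw [card_powerset, Nat.card_Icc, Nat.add_sub_cancel]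
open Finset in
lemma f_lower (m : ℕ) (hm : 1 ≤ m) : 2 ^ m ≤ f m + m * 2 ^ (m / 2) := by
  classical
  obtain ⟨k, rfl⟩ : ∃ k, m = k + 1 := ⟨m - 1, by omega⟩
  set m := k + 1 with hmdef
  have hsplit : f m + (((Icc 1 m).powerset).filter (fun A => ¬ A.gcd id = 1)).card = 2 ^ m := by
    unfold f
    rw [Finset.card_filter_add_card_filter_not, card_powerset, Nat.card_Icc,
      Nat.add_sub_cancel]
  have hsub : ((Icc 1 m).powerset).filter (fun A => ¬ A.gcd id = 1) ⊆
      insert (∅ : Finset ℕ)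
        ((Icc 2 m).biUnion fun d => ((Icc 1 m).filter (fun x => d ∣ x)).powerset) := by
    intro A hA
    simp only [mem_filter, mem_powerset] at hA
    obtain ⟨hA1, hA2⟩ := hA
    rcases eq_or_ne A ∅ with rfl | hne
    · exact mem_insert_self _ _
    refine mem_insert_of_mem ?_
    rw [mem_biUnion]
    obtain ⟨x, hx⟩ := nonempty_of_ne_empty hne
    have hx' := hA1 hx
    rw [mem_Icc] at hx'
    have hdvd : A.gcd id ∣ x := gcd_dvd hx
    have hg0 : A.gcd id ≠ 0 := by
      intro h0
      have := (gcd_eq_zero_iff.mp h0) x hx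
      simp only [id] at this
      omega
    refine ⟨A.gcd id, ?_, ?_⟩
    · rw [mem_Icc]
      have hle : A.gcd id ≤ x := Nat.le_of_dvd (by omega) hdvd
      omega
    · rw [mem_powerset]
      intro y hy
      rw [mem_filter]
      exact ⟨hA1 hy, gcd_dvd hy⟩
  have h3 : ∀ d ∈ Icc 2 m, (((Icc 1 m).filter (fun x => d ∣ x)).powerset).card ≤ 2 ^ (m / 2) := by
    intro d hd
    rw [mem_Icc] at hd
    rw [card_powerset]
    have hc : ((Icc 1 m).filter (fun x => d ∣ x)).card = m / d := by
      have h : Icc 1 m = Ioc 0 m := Finset.Icc_add_one_left_eq_Ioc 0 m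
      rw [h]
      exact Nat.Ioc_filter_dvd_card_eq_div m d
    rw [hc]
    exact Nat.pow_le_pow_right (by norm_num) (Nat.div_le_div_left hd.1 (by norm_num))
  have hcard : (((Icc 1 m).powerset).filter (fun A => ¬ A.gcd id = 1)).card ≤ m * 2 ^ (m / 2) := by
    have h1 := card_le_card hsub
    have h2 := card_insert_le (∅ : Finset ℕ)
      ((Icc 2 m).biUnion fun d => ((Icc 1 m).filter (fun x => d ∣ x)).powerset)
    have h4 : ((Icc 2 m).biUnion fun d => ((Icc 1 m).filter (fun x => d ∣ x)).powerset).card ≤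
        k * 2 ^ (m / 2) := by
      calc _ ≤ ∑ d ∈ Icc 2 m, (((Icc 1 m).filter (fun x => d ∣ x)).powerset).card :=
            by apply card_biUnion_le
        _ ≤ (Icc 2 m).card • 2 ^ (m / 2) := sum_le_card_nsmul _ _ _ h3
        _ = k * 2 ^ (m / 2) := by rw [Nat.card_Icc, smul_eq_mul]; congr 1
    have hX : 1 ≤ 2 ^ (m / 2) := Nat.one_le_two_pow
    have : m * 2 ^ (m / 2) = k * 2 ^ (m / 2) + 2 ^ (m / 2) := by rw [hmdef]; ring
    omega
  omega

lemma pow_big (m : ℕ) (hm : 14 ≤ m) : 512 * m + 256 ≤ 2 ^ m := by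
  induction m, hm using Nat.le_induction with
  | base => norm_num
  | succ m hm ih =>
    have : 512 ≤ 2 ^ m := by
      calc (512:ℕ) ≤ 512 * m + 256 := by omega
        _ ≤ 2 ^ m := ih
    calc 512 * (m + 1) + 256 = (512 * m + 256) + 512 := by ring
      _ ≤ 2 ^ m + 2 ^ m := by omega
      _ = 2 ^ (m + 1) := by ring

set_option maxHeartbeats 1000000 in
theorem stmt_16 :
    ∃ n₀ : ℕ, 0 < n₀ ∧ ∀ n : ℕ, n₀ ≤ n →
      f (3 * n) ^ 2 + 2 * f (3 * n) * f (2 * n) >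
        f (3 * n - 1) * f (3 * n + 1) + f (2 * n - 1) * f (3 * n + 1) := by
  refine ⟨28, by norm_num, ?_⟩
  intro n hn
  set A : ℕ := 2 ^ n with hA
  set s : ℕ := 2 ^ (3 * n / 2) with hs
  set t : ℕ := 2 ^ (n / 2) with ht
  set a : ℕ := f (3 * n) with ha
  set b : ℕ := f (2 * n) with hb
  set c : ℕ := f (3 * n - 1) with hc
  set d : ℕ := f (3 * n + 1) with hd
  set e : ℕ := f (2 * n - 1) with he
  have hpow : ∀ j : ℕ, A ^ j = 2 ^ (n * j) := fun j => (pow_mul 2 n j).symm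
  have ht256 : 256 * n ≤ t := by
    have h := pow_big (n / 2) (by omega)
    have : 256 * n ≤ 512 * (n / 2) + 256 := by omega
    omega
  have hA256 : 256 * n ≤ A := by
    have h := pow_big n (by omega)
    omega
  have hst : s * t ≤ A ^ 2 := by
    rw [hpow, hs, ht, ← pow_add]
    exact Nat.pow_le_pow_right (by norm_num) (by omega)
  have hs2 : s ^ 2 ≤ A ^ 3 := by
    rw [hpow, hs, ← pow_mul]
    exact Nat.pow_le_pow_right (by norm_num) (by omega)
  have hsA2 : s ≤ A ^ 2 := by
    rw [hpow, hs]
    exact Nat.pow_le_pow_right (by norm_num) (by omega)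
  have h1 : A ^ 3 ≤ a + 3 * n * s := by
    rw [hpow]
    have := f_lower (3 * n) (by omega)
    rw [show n * 3 = 3 * n by ring]
    exact this
  have h2 : A ^ 2 ≤ b + 2 * n * A := by
    rw [hpow]
    have h := f_lower (2 * n) (by omega)
    have h2n : 2 * n / 2 = n := by omega
    rw [h2n] at h
    rw [show n * 2 = 2 * n by ring]
    exact h
  have h3 : a ≤ A ^ 3 := by
    rw [hpow, show n * 3 = 3 * n by ring]; exact f_le _
  have h4 : b ≤ A ^ 2 := by
    rw [hpow, show n * 2 = 2 * n by ring]; exact f_le _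
  have hcd : c * d ≤ A ^ 6 := by
    calc c * d ≤ 2 ^ (3 * n - 1) * 2 ^ (3 * n + 1) := Nat.mul_le_mul (f_le _) (f_le _)
      _ = 2 ^ ((3 * n - 1) + (3 * n + 1)) := (pow_add 2 _ _).symm
      _ = A ^ 6 := by rw [hpow]; congr 1; omega
  have hed : e * d ≤ A ^ 5 := by
    calc e * d ≤ 2 ^ (2 * n - 1) * 2 ^ (3 * n + 1) := Nat.mul_le_mul (f_le _) (f_le _)
      _ = 2 ^ ((2 * n - 1) + (3 * n + 1)) := (pow_add 2 _ _).symm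
      _ = A ^ 5 := by rw [hpow]; congr 1; omega
  have hA1 : 1 ≤ A ^ 5 := Nat.one_le_pow _ _ (by positivity)
  have hAle : A ^ 4 ≤ A ^ 5 := Nat.pow_le_pow_right (Nat.one_le_two_pow) (by norm_num)
  have k1 : A ^ 6 ≤ a ^ 2 + 6 * (n * s * A ^ 3) + 9 * (n ^ 2 * s ^ 2) := by
    calc A ^ 6 = (A ^ 3) ^ 2 := by ring
      _ ≤ (a + 3 * n * s) ^ 2 := Nat.pow_le_pow_left h1 2
      _ = a ^ 2 + 6 * (n * s * a) + 9 * (n ^ 2 * s ^ 2) := by ring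
      _ ≤ a ^ 2 + 6 * (n * s * A ^ 3) + 9 * (n ^ 2 * s ^ 2) := by gcongr
  have k2 : A ^ 5 ≤ a * b + 2 * (n * A ^ 4) + 3 * (n * s * A ^ 2) + 6 * (n ^ 2 * s * A) := by
    calc A ^ 5 = A ^ 3 * A ^ 2 := by ring
      _ ≤ (a + 3 * n * s) * (b + 2 * n * A) := Nat.mul_le_mul h1 h2
      _ = a * b + 2 * (n * (a * A)) + 3 * (n * (s * b)) + 6 * (n ^ 2 * s * A) := by ring
      _ ≤ a * b + 2 * (n * (A ^ 3 * A)) + 3 * (n * (s * A ^ 2)) + 6 * (n ^ 2 * s * A) := by gcongr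
      _ = a * b + 2 * (n * A ^ 4) + 3 * (n * s * A ^ 2) + 6 * (n ^ 2 * s * A) := by ring
  have k3 : 256 * (n * s * A ^ 3) ≤ A ^ 5 := by
    calc 256 * (n * s * A ^ 3) = (256 * n) * s * A ^ 3 := by ring
      _ ≤ t * s * A ^ 3 := by gcongr
      _ = (s * t) * A ^ 3 := by ring
      _ ≤ A ^ 2 * A ^ 3 := by gcongr
      _ = A ^ 5 := by ring
  have k4 : 65536 * (n ^ 2 * s ^ 2) ≤ A ^ 5 := by
    calc 65536 * (n ^ 2 * s ^ 2) = (256 * n) * (256 * n) * s ^ 2 := by ring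
      _ ≤ A * A * A ^ 3 := by gcongr
      _ = A ^ 5 := by ring
  have k5 : 256 * (n * A ^ 4) ≤ A ^ 5 := by
    calc 256 * (n * A ^ 4) = (256 * n) * A ^ 4 := by ring
      _ ≤ A * A ^ 4 := by gcongr
      _ = A ^ 5 := by ring
  have k6 : 256 * (n * s * A ^ 2) ≤ A ^ 5 := by
    calc 256 * (n * s * A ^ 2) = (256 * n) * s * A ^ 2 := by ring
      _ ≤ t * s * A ^ 2 := by gcongr
      _ = (s * t) * A ^ 2 := by ring
      _ ≤ A ^ 2 * A ^ 2 := by gcongr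
      _ = A ^ 4 := by ring
      _ ≤ A ^ 5 := hAle
  have k7 : 65536 * (n ^ 2 * s * A) ≤ A ^ 5 := by
    calc 65536 * (n ^ 2 * s * A) = (256 * n) * (256 * n) * s * A := by ring
      _ ≤ A * A * A ^ 2 * A := by gcongr
      _ = A ^ 5 := by ring
  linarith [k1, k2, k3, k4, k5, k6, k7, hcd, hed, hA1]
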